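/- Under stationarity of the RBB process with N = rL balls in L bins, the covariance of occupation indicators satisfies Cov(w₁(η^L), w₂(η^L)) = −E[w₁(η^L)]² + 2E[w₁(η^L)]·((r+1)L − 1)/(L−1) − 2rL/(L−1), where w_j(η) = 1{η_j > 0}. -/

import Mathlib

open MeasureTheory
open scoped ENNReal

/-- Number of non-empty bins of a configuration. -/
def rbbTrials {L : ℕ} (a : Fin L → ℕ) : ℕ := ∑ j, if 0 < a j then 1 else 0

/-- Transition kernel of the RBB process. -/
noncomputable def rbbKernel (L : ℕ) (a ξ : Fin L → ℕ) : ℝ≥0∞ :=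
  ∑' b : Fin L → ℕ,
    if ξ = (fun k => a k - (if 0 < a k then 1 else 0) + b k)
        ∧ (∑ k, b k) = rbbTrials a then
      ENNReal.ofReal
        (((Nat.factorial (rbbTrials a) : ℝ) / ∏ k, (Nat.factorial (b k) : ℝ))
          * (1 / (L : ℝ)) ^ rbbTrials a)
    else 0

open Finset

section aux

lemma rbb_mult_cast {L W : ℕ} {b : Fin L → ℕ} (h : ∑ k, b k = W) :
    ((W.factorial : ℝ) / ∏ k, (Nat.factorial (b k) : ℝ)) = (Nat.multinomial univ b : ℝ) := by
  rw [div_eq_iff (by positivity)]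
  rw [← Nat.cast_prod, ← Nat.cast_mul, mul_comm, Nat.multinomial_spec, h]

lemma rbb_M0 (L W : ℕ) :
    ∑ b ∈ piAntidiag (univ : Finset (Fin L)) W, (Nat.multinomial univ b : ℝ) = (L : ℝ) ^ W := by
  have := Finset.sum_pow_eq_sum_piAntidiag (univ : Finset (Fin L)) (fun _ => (1:ℝ)) W
  simp only [one_pow, prod_const_one, mul_one, sum_const, card_univ, Fintype.card_fin,
    nsmul_eq_mul] at this
  simpa using this.symm

lemma rbb_P {L : ℕ} (j : Fin L) (W : ℕ) (x : ℝ) :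
    ∑ b ∈ piAntidiag (univ : Finset (Fin L)) W, (Nat.multinomial univ b : ℝ) * x ^ (b j)
      = (x + ((L : ℝ) - 1)) ^ W := by
  have key := Finset.sum_pow_eq_sum_piAntidiag (univ : Finset (Fin L))
    (fun i => if i = j then x else 1) W
  have hsum : (∑ i : Fin L, if i = j then x else (1:ℝ)) = x + ((L:ℝ) - 1) := by
    have : ∀ i : Fin L, (if i = j then x else (1:ℝ)) = 1 + if i = j then x - 1 else 0 := by
      intro i; split <;> ring
    simp only [this, Finset.sum_add_distrib, Finset.sum_const, card_univ, Fintype.card_fin,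
      Finset.sum_ite_eq' univ j (fun _ => x - 1), mem_univ, if_true, nsmul_eq_mul, mul_one]
    ring
  have hprod : ∀ b ∈ piAntidiag (univ : Finset (Fin L)) W,
      (∏ i, (if i = j then x else (1:ℝ)) ^ b i) = x ^ b j := by
    intro b _
    rw [Finset.prod_eq_single j (fun i _ hij => by simp [hij]) (by simp)]
    simp
  rw [hsum] at key
  rw [key]
  exact Finset.sum_congr rfl fun b hb => by rw [hprod b hb]

lemma rbb_P1 {L : ℕ} (j : Fin L) (W : ℕ) (x : ℝ) :
    ∑ b ∈ piAntidiag (univ : Finset (Fin L)) W,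
        (Nat.multinomial univ b : ℝ) * ((b j : ℝ) * x ^ (b j - 1))
      = (W : ℝ) * (x + ((L : ℝ) - 1)) ^ (W - 1) := by
  have h1 : HasDerivAt (fun y : ℝ => ∑ b ∈ piAntidiag (univ : Finset (Fin L)) W,
      (Nat.multinomial univ b : ℝ) * y ^ (b j))
      (∑ b ∈ piAntidiag (univ : Finset (Fin L)) W,
        (Nat.multinomial univ b : ℝ) * ((b j : ℝ) * x ^ (b j - 1))) x :=
    HasDerivAt.fun_sum fun (b : Fin L → ℕ) _ => (hasDerivAt_pow (b j) x).const_mul _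
  have h2 : HasDerivAt (fun y : ℝ => (y + ((L : ℝ) - 1)) ^ W)
      ((W : ℝ) * (x + ((L : ℝ) - 1)) ^ (W - 1) * 1) x :=
    ((hasDerivAt_id x).add_const _).pow W
  have hfe : (fun y : ℝ => ∑ b ∈ piAntidiag (univ : Finset (Fin L)) W,
      (Nat.multinomial univ b : ℝ) * y ^ (b j)) = fun y => (y + ((L : ℝ) - 1)) ^ W :=
    funext fun y => rbb_P j W y
  rw [hfe] at h1
  simpa using h1.unique h2

lemma rbb_M1 {L : ℕ} (j : Fin L) (W : ℕ) :
    ∑ b ∈ piAntidiag (univ : Finset (Fin L)) W,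
        (Nat.multinomial univ b : ℝ) * (b j : ℝ)
      = (W : ℝ) * (L : ℝ) ^ (W - 1) := by
  have h := rbb_P1 j W 1
  simp only [one_pow, mul_one] at h
  rw [h]
  norm_num

lemma rbb_M2 {L : ℕ} (j : Fin L) (W : ℕ) :
    ∑ b ∈ piAntidiag (univ : Finset (Fin L)) W,
        (Nat.multinomial univ b : ℝ) * ((b j : ℝ) * ((b j - 1 : ℕ) : ℝ))
      = (W : ℝ) * ((W - 1 : ℕ) : ℝ) * (L : ℝ) ^ (W - 2) := by
  have h1 : HasDerivAt (fun y : ℝ => ∑ b ∈ piAntidiag (univ : Finset (Fin L)) W,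
      (Nat.multinomial univ b : ℝ) * ((b j : ℝ) * y ^ (b j - 1)))
      (∑ b ∈ piAntidiag (univ : Finset (Fin L)) W,
        (Nat.multinomial univ b : ℝ) * ((b j : ℝ) * (((b j - 1 : ℕ) : ℝ) * (1:ℝ) ^ (b j - 1 - 1)))) 1 :=
    HasDerivAt.fun_sum fun (b : Fin L → ℕ) _ =>
      (((hasDerivAt_pow (b j - 1) (1:ℝ)).const_mul ((b j : ℝ))).const_mul _)
  have h2 : HasDerivAt (fun y : ℝ => (W : ℝ) * (y + ((L : ℝ) - 1)) ^ (W - 1))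
      ((W : ℝ) * (((W - 1 : ℕ) : ℝ) * ((1:ℝ) + ((L : ℝ) - 1)) ^ (W - 1 - 1) * 1)) 1 :=
    (((hasDerivAt_id (1:ℝ)).add_const _).pow (W - 1)).const_mul _
  have hfe : (fun y : ℝ => ∑ b ∈ piAntidiag (univ : Finset (Fin L)) W,
      (Nat.multinomial univ b : ℝ) * ((b j : ℝ) * y ^ (b j - 1)))
      = fun y => (W : ℝ) * (y + ((L : ℝ) - 1)) ^ (W - 1) :=
    funext fun y => rbb_P1 j W y
  rw [hfe] at h1
  have := h1.unique h2
  simp only [one_pow, mul_one] at this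
  rw [this, show (1:ℝ) + ((L:ℝ) - 1) = (L:ℝ) by ring, Nat.sub_sub]
  ring

lemma rbb_kernel_tsum (L : ℕ) (a : Fin L → ℕ) (f : (Fin L → ℕ) → ℝ≥0∞) :
    ∑' ξ, rbbKernel L a ξ * f ξ
      = ∑ b ∈ piAntidiag (univ : Finset (Fin L)) (rbbTrials a),
          ENNReal.ofReal ((Nat.multinomial univ b : ℝ) * (1 / (L:ℝ)) ^ (rbbTrials a))
            * f (fun k => a k - (if 0 < a k then 1 else 0) + b k) := by
  simp only [rbbKernel]
  calc ∑' ξ, (∑' b : Fin L → ℕ,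
        if ξ = (fun k => a k - (if 0 < a k then 1 else 0) + b k)
            ∧ (∑ k, b k) = rbbTrials a then
          ENNReal.ofReal (((Nat.factorial (rbbTrials a) : ℝ) / ∏ k, (Nat.factorial (b k) : ℝ))
            * (1 / (L : ℝ)) ^ rbbTrials a) else 0) * f ξ
      = ∑' (b : Fin L → ℕ) (ξ : Fin L → ℕ),
          (if ξ = (fun k => a k - (if 0 < a k then 1 else 0) + b k)
            ∧ (∑ k, b k) = rbbTrials a then
          ENNReal.ofReal (((Nat.factorial (rbbTrials a) : ℝ) / ∏ k, (Nat.factorial (b k) : ℝ))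
            * (1 / (L : ℝ)) ^ rbbTrials a) else 0) * f ξ := by
        rw [ENNReal.tsum_comm]
        exact tsum_congr fun ξ => ENNReal.tsum_mul_right.symm
    _ = ∑' b : Fin L → ℕ,
          (if (∑ k, b k) = rbbTrials a then
            ENNReal.ofReal (((Nat.factorial (rbbTrials a) : ℝ) / ∏ k, (Nat.factorial (b k) : ℝ))
              * (1 / (L : ℝ)) ^ rbbTrials a)
              * f (fun k => a k - (if 0 < a k then 1 else 0) + b k)
          else 0) := by
        refine tsum_congr fun b => ?_
        rw [tsum_eq_single (fun k => a k - (if 0 < a k then 1 else 0) + b k)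
          (fun ξ hξ => by simp [hξ])]
        by_cases hQ : (∑ k, b k) = rbbTrials a <;> simp [hQ]
    _ = ∑ b ∈ piAntidiag (univ : Finset (Fin L)) (rbbTrials a),
          ENNReal.ofReal ((Nat.multinomial univ b : ℝ) * (1 / (L:ℝ)) ^ (rbbTrials a))
            * f (fun k => a k - (if 0 < a k then 1 else 0) + b k) := by
        rw [tsum_eq_sum (s := piAntidiag (univ : Finset (Fin L)) (rbbTrials a))
          (fun b hb => by
            rw [if_neg]
            intro h
            exact hb (by simp [mem_piAntidiag, h]))]
        refine Finset.sum_congr rfl fun b hb => ?_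
        have hs : (∑ k, b k) = rbbTrials a := by
          simpa [mem_piAntidiag] using hb
        rw [if_pos hs, rbb_mult_cast hs]

lemma rbb_sq (n : ℕ) : ((n:ℝ))^2 = (n:ℝ) * ((n - 1 : ℕ) : ℝ) + (n:ℝ) := by
  cases n with
  | zero => simp
  | succ m => push_cast [Nat.succ_sub_one]; ring

lemma rbb_real_moment {L : ℕ} (j : Fin L) (W c : ℕ) :
    ∑ b ∈ piAntidiag (univ : Finset (Fin L)) W,
        (Nat.multinomial univ b : ℝ) * (1 / (L:ℝ)) ^ W * ((L:ℝ)^2 * ((c:ℝ) + (b j : ℝ))^2)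
      = (L:ℝ)^2 * (c:ℝ)^2 + 2*(L:ℝ)*(c:ℝ)*(W:ℝ) + (W:ℝ)^2 + (W:ℝ)*((L:ℝ)-1) := by
  have hL0 : (L:ℝ) ≠ 0 := by
    have := j.pos
    positivity
  have key : ∑ b ∈ piAntidiag (univ : Finset (Fin L)) W,
        (Nat.multinomial univ b : ℝ) * (1 / (L:ℝ)) ^ W * ((L:ℝ)^2 * ((c:ℝ) + (b j : ℝ))^2)
      = (1/(L:ℝ))^W * ((L:ℝ)^2*(c:ℝ)^2 * ((L:ℝ)^W)
          + 2*(L:ℝ)^2*(c:ℝ) * ((W:ℝ) * (L:ℝ)^(W-1))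
          + (L:ℝ)^2 * ((W:ℝ) * ((W - 1 : ℕ) : ℝ) * (L : ℝ) ^ (W - 2))
          + (L:ℝ)^2 * ((W:ℝ) * (L:ℝ)^(W-1))) := by
    rw [← rbb_M0 L W, ← rbb_M1 j W, ← rbb_M2 j W]
    simp only [Finset.mul_sum, ← Finset.sum_add_distrib]
    refine Finset.sum_congr rfl fun b _ => ?_
    have h := rbb_sq (b j)
    linear_combination ((Nat.multinomial univ b : ℝ) * (1/(L:ℝ))^W * (L:ℝ)^2) * h
  rw [key]
  match W with
  | 0 => norm_num
  | 1 => push_cast; field_simp; ring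
  | (m+2) =>
    have h1 : (m+2) - 1 = m + 1 := rfl
    have h2 : (m+2) - 2 = m := rfl
    rw [h1, h2]
    push_cast [Nat.succ_sub_one]
    simp only [one_div, inv_pow]
    field_simp
    ring

def rbbC {L : ℕ} (j : Fin L) (a : Fin L → ℕ) : ℕ := a j - (if 0 < a j then 1 else 0)

def rbbG {L : ℕ} (j : Fin L) (a : Fin L → ℕ) : ℕ :=
  L^2*(rbbC j a)^2 + 2*L*(rbbC j a)*(rbbTrials a) + (rbbTrials a)^2 + (rbbTrials a)*(L-1)

lemma rbb_kernel_moment {L : ℕ} (j : Fin L) (a : Fin L → ℕ) :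
    ∑' ξ, rbbKernel L a ξ * (((L^2 * (ξ j)^2 : ℕ)) : ℝ≥0∞) = ((rbbG j a : ℕ) : ℝ≥0∞) := by
  have hL1 : 1 ≤ L := j.pos
  rw [rbb_kernel_tsum]
  have hstep : ∀ b ∈ piAntidiag (univ : Finset (Fin L)) (rbbTrials a),
      ENNReal.ofReal ((Nat.multinomial univ b : ℝ) * (1 / (L:ℝ)) ^ (rbbTrials a))
        * (((L^2 * (((fun k => a k - (if 0 < a k then 1 else 0) + b k) j))^2 : ℕ)) : ℝ≥0∞)
      = ENNReal.ofReal ((Nat.multinomial univ b : ℝ) * (1 / (L:ℝ)) ^ (rbbTrials a)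
          * ((L:ℝ)^2 * (((rbbC j a : ℕ) : ℝ) + ((b j : ℕ) : ℝ))^2)) := by
    intro b _
    rw [← ENNReal.ofReal_natCast (L^2 * (((fun k => a k - (if 0 < a k then 1 else 0) + b k) j))^2),
      ← ENNReal.ofReal_mul (by positivity)]
    congr 1
    push_cast [rbbC]
    ring
  rw [Finset.sum_congr rfl hstep, ← ENNReal.ofReal_sum_of_nonneg
    (fun b _ => by positivity)]
  have hreal := rbb_real_moment j (rbbTrials a) (rbbC j a)
  rw [hreal, ← ENNReal.ofReal_natCast]
  congr 1
  push_cast [rbbG, Nat.cast_sub hL1]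
  ring

lemma rbb_stationarity {L : ℕ} (ν : Measure (Fin L → ℕ))
    (hinv : ∀ ξ : Fin L → ℕ, ν {ξ} = ∑' a : Fin L → ℕ, ν {a} * rbbKernel L a ξ) (j : Fin L) :
    ∑' ξ, ν {ξ} * (((L^2 * (ξ j)^2 : ℕ)) : ℝ≥0∞)
      = ∑' a, ν {a} * ((rbbG j a : ℕ) : ℝ≥0∞) := by
  calc ∑' ξ, ν {ξ} * (((L^2 * (ξ j)^2 : ℕ)) : ℝ≥0∞)
      = ∑' ξ, (∑' a, ν {a} * rbbKernel L a ξ) * (((L^2 * (ξ j)^2 : ℕ)) : ℝ≥0∞) := by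
        exact tsum_congr fun ξ => by rw [← hinv ξ]
    _ = ∑' (ξ) (a : Fin L → ℕ), ν {a} * rbbKernel L a ξ * (((L^2 * (ξ j)^2 : ℕ)) : ℝ≥0∞) := by
        exact tsum_congr fun ξ => ENNReal.tsum_mul_right.symm
    _ = ∑' (a : Fin L → ℕ) (ξ), ν {a} * (rbbKernel L a ξ * (((L^2 * (ξ j)^2 : ℕ)) : ℝ≥0∞)) := by
        rw [ENNReal.tsum_comm]
        exact tsum_congr fun a => tsum_congr fun ξ => by rw [mul_assoc]
    _ = ∑' a, ν {a} * ((rbbG j a : ℕ) : ℝ≥0∞) := by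
        exact tsum_congr fun a => by rw [ENNReal.tsum_mul_left, rbb_kernel_moment j a]

/-- off-support singletons are null -/
lemma rbb_offS {L N : ℕ} (ν : Measure (Fin L → ℕ)) [IsProbabilityMeasure ν]
    (hsupp : ν {η | (∑ k, η k) = N} = 1) {a : Fin L → ℕ}
    (ha : a ∉ piAntidiag (univ : Finset (Fin L)) N) : ν {a} = 0 := by
  have hmeas : MeasurableSet {η : Fin L → ℕ | (∑ k, η k) = N} :=
    (Set.to_countable _).measurableSet
  have hc : ν {η : Fin L → ℕ | (∑ k, η k) = N}ᶜ = 0 := by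
    rw [measure_compl hmeas (measure_ne_top ν _), hsupp, measure_univ, tsub_self]
  refine measure_mono_null ?_ hc
  intro x hx
  simp only [Set.mem_singleton_iff] at hx
  subst hx
  simp only [Set.mem_compl_iff, Set.mem_setOf_eq]
  intro h
  exact ha (by simp [mem_piAntidiag, h])

lemma rbb_tsum_toReal {L N : ℕ} (ν : Measure (Fin L → ℕ)) [IsProbabilityMeasure ν]
    (hsupp : ν {η | (∑ k, η k) = N} = 1) (f : (Fin L → ℕ) → ℕ) :
    (∑' a, ν {a} * (f a : ℝ≥0∞)).toReal
      = ∑ a ∈ piAntidiag (univ : Finset (Fin L)) N, (ν {a}).toReal * (f a : ℝ) := by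
  rw [tsum_eq_sum (s := piAntidiag (univ : Finset (Fin L)) N)
    (fun a ha => by rw [rbb_offS ν hsupp ha, zero_mul])]
  rw [ENNReal.toReal_sum (fun a _ => ENNReal.mul_ne_top (measure_ne_top ν _)
    (ENNReal.natCast_ne_top _))]
  exact Finset.sum_congr rfl fun a _ => by rw [ENNReal.toReal_mul, ENNReal.toReal_natCast]

lemma rbb_mass {L N : ℕ} (ν : Measure (Fin L → ℕ)) [IsProbabilityMeasure ν]
    (hsupp : ν {η | (∑ k, η k) = N} = 1) :
    ∑ a ∈ piAntidiag (univ : Finset (Fin L)) N, (ν {a}).toReal = 1 := by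
  have h1 : (∑' a : Fin L → ℕ, ν {a} * ((1:ℕ) : ℝ≥0∞)) = 1 := by
    simp only [Nat.cast_one, mul_one]
    have hu : ⋃ a : Fin L → ℕ, ({a} : Set (Fin L → ℕ)) = Set.univ := by
      ext x; simp
    have := measure_iUnion (μ := ν) (f := fun a : Fin L → ℕ => ({a} : Set (Fin L → ℕ)))
      (fun i j hij => by simp [hij]) (fun a => measurableSet_singleton a)
    rw [hu] at this
    rw [← this, measure_univ]
  have h2 := rbb_tsum_toReal (N := N) ν hsupp (fun _ => 1)
  rw [h1] at h2
  simpa using h2.symm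

lemma rbb_integral {L N : ℕ} (ν : Measure (Fin L → ℕ)) [IsProbabilityMeasure ν]
    (hsupp : ν {η | (∑ k, η k) = N} = 1) (f : (Fin L → ℕ) → ℝ) (hb : ∀ a, ‖f a‖ ≤ 1) :
    ∫ η, f η ∂ν = ∑ a ∈ piAntidiag (univ : Finset (Fin L)) N, (ν {a}).toReal * f a := by
  have hint : Integrable f ν := by
    refine (integrable_const (1:ℝ)).mono' ((measurable_of_countable f).aestronglyMeasurable) ?_
    exact Filter.Eventually.of_forall hb
  rw [integral_countable' hint]
  rw [tsum_eq_sum (s := piAntidiag (univ : Finset (Fin L)) N)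
    (fun a ha => by simp [Measure.real, rbb_offS ν hsupp ha])]
  exact Finset.sum_congr rfl fun a _ => smul_eq_mul ..

noncomputable def rbbE {L : ℕ} (N : ℕ) (ν : Measure (Fin L → ℕ))
    (f : (Fin L → ℕ) → ℝ) : ℝ :=
  ∑ a ∈ piAntidiag (univ : Finset (Fin L)) N, (ν {a}).toReal * f a

lemma rbbE_sum {L N : ℕ} (ν : Measure (Fin L → ℕ)) (g : Fin L → (Fin L → ℕ) → ℝ) :
    rbbE N ν (fun a => ∑ j, g j a) = ∑ j, rbbE N ν (g j) := by
  simp only [rbbE, Finset.mul_sum]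
  exact Finset.sum_comm

lemma rbbE_smul {L N : ℕ} (ν : Measure (Fin L → ℕ)) (c : ℝ) (f : (Fin L → ℕ) → ℝ) :
    rbbE N ν (fun a => c * f a) = c * rbbE N ν f := by
  simp only [rbbE, Finset.mul_sum]
  exact Finset.sum_congr rfl fun a _ => by ring

lemma rbbE_congr {L N : ℕ} (ν : Measure (Fin L → ℕ)) {f g : (Fin L → ℕ) → ℝ}
    (h : ∀ a ∈ piAntidiag (univ : Finset (Fin L)) N, f a = g a) :
    rbbE N ν f = rbbE N ν g :=
  Finset.sum_congr rfl fun a ha => by rw [h a ha]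

lemma rbb_perm {L N : ℕ} (ν : Measure (Fin L → ℕ))
    (hexch : ∀ σ : Equiv.Perm (Fin L),
      Measure.map (fun η => fun k => η (σ k)) ν = ν)
    (σ : Equiv.Perm (Fin L)) (f : (Fin L → ℕ) → ℝ) :
    rbbE N ν (fun a => f (fun k => a (σ k))) = rbbE N ν f := by
  have hPinv : ∀ a : Fin L → ℕ, ν {fun k => a (σ k)} = ν {a} := by
    intro a
    have h := hexch σ⁻¹
    conv_rhs => rw [← h]
    rw [Measure.map_apply (measurable_of_countable _) (measurableSet_singleton a)]
    congr 1
    ext η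
    simp only [Set.mem_preimage, Set.mem_singleton_iff]
    constructor
    · rintro rfl
      funext k
      simp
    · rintro rfl
      funext k
      simp
  refine Finset.sum_nbij' (fun a => fun k => a (σ k)) (fun a => fun k => a (σ⁻¹ k))
    ?_ ?_ ?_ ?_ ?_
  · intro a ha
    simp only [mem_piAntidiag] at ha ⊢
    exact ⟨by rw [Equiv.sum_comp σ a]; exact ha.1, fun i _ => mem_univ i⟩
  · intro a ha
    simp only [mem_piAntidiag] at ha ⊢
    exact ⟨by rw [Equiv.sum_comp σ⁻¹ a]; exact ha.1, fun i _ => mem_univ i⟩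
  · intro a _; funext k; simp
  · intro a _; funext k; simp
  · intro a _
    rw [hPinv a]

end aux

theorem rbb_stationary_covariance (L N : ℕ) (hL : 2 ≤ L) (r : ℝ)
    (hN : (N : ℝ) = r * L)
    (ν : Measure (Fin L → ℕ)) [IsProbabilityMeasure ν]
    (hsupp : ν {η | (∑ k, η k) = N} = 1)
    (hinv : ∀ ξ : Fin L → ℕ, ν {ξ} = ∑' a : Fin L → ℕ, ν {a} * rbbKernel L a ξ)
    (hexch : ∀ σ : Equiv.Perm (Fin L),
      Measure.map (fun η => fun k => η (σ k)) ν = ν) :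
    (∫ η, (if 0 < η ⟨0, by omega⟩ then (1 : ℝ) else 0)
          * (if 0 < η ⟨1, by omega⟩ then (1 : ℝ) else 0) ∂ν)
      - (∫ η, (if 0 < η ⟨0, by omega⟩ then (1 : ℝ) else 0) ∂ν)
        * (∫ η, (if 0 < η ⟨1, by omega⟩ then (1 : ℝ) else 0) ∂ν)
      = -(∫ η, (if 0 < η ⟨0, by omega⟩ then (1 : ℝ) else 0) ∂ν) ^ 2
        + 2 * (∫ η, (if 0 < η ⟨0, by omega⟩ then (1 : ℝ) else 0) ∂ν)
            * (((r + 1) * L - 1) / ((L : ℝ) - 1))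
        - 2 * r * (L : ℝ) / ((L : ℝ) - 1) := by
  have hL1 : 1 ≤ L := by omega
  have hL0 : (L : ℝ) ≠ 0 := Nat.cast_ne_zero.mpr (by omega)
  have hLR : (2:ℝ) ≤ (L:ℝ) := by exact_mod_cast hL
  have hL1R : (L : ℝ) - 1 ≠ 0 := by linarith
  set j0 : Fin L := ⟨0, by omega⟩ with hj0def
  set j1 : Fin L := ⟨1, by omega⟩ with hj1def
  have hj01 : j0 ≠ j1 := by simp [hj0def, hj1def, Fin.ext_iff]
  -- notation
  set p : ℝ := rbbE N ν (fun a => if 0 < a j0 then (1:ℝ) else 0) with hp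
  set q : ℝ := rbbE N ν (fun a => (if 0 < a j0 then (1:ℝ) else 0)
    * (if 0 < a j1 then (1:ℝ) else 0)) with hq
  -- W symmetric
  have hWsymm : ∀ (σ : Equiv.Perm (Fin L)) (a : Fin L → ℕ),
      rbbTrials (fun k => a (σ k)) = rbbTrials a := by
    intro σ a
    exact Fintype.sum_equiv σ _ _ fun k => rfl
  have hWcast : ∀ a : Fin L → ℕ,
      ((rbbTrials a : ℕ) : ℝ) = ∑ j, (if 0 < a j then (1:ℝ) else 0) := by
    intro a
    simp only [rbbTrials]
    push_cast [apply_ite (Nat.cast : ℕ → ℝ)]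
    rfl
  -- exchangeability consequences
  have hwj : ∀ j : Fin L, rbbE N ν (fun a => if 0 < a j then (1:ℝ) else 0) = p := by
    intro j
    have h := rbb_perm (N := N) ν hexch (Equiv.swap j0 j)
      (fun a => if 0 < a j0 then (1:ℝ) else 0)
    simp only [Equiv.swap_apply_left] at h
    rw [h]
  have hq2 : ∀ j : Fin L, j ≠ j0 →
      rbbE N ν (fun a => (if 0 < a j0 then (1:ℝ) else 0)
        * (if 0 < a j then (1:ℝ) else 0)) = q := by
    intro j hj
    by_cases hjj : j = j1
    · rw [hjj, hq]
    · have h := rbb_perm (N := N) ν hexch (Equiv.swap j1 j)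
        (fun a => (if 0 < a j0 then (1:ℝ) else 0) * (if 0 < a j1 then (1:ℝ) else 0))
      simp only [Equiv.swap_apply_left,
        Equiv.swap_apply_of_ne_of_ne hj01 (Ne.symm hj)] at h
      rw [h]
  have hxj : ∀ j : Fin L, rbbE N ν (fun a => (a j : ℝ))
      = rbbE N ν (fun a => (a j0 : ℝ)) := by
    intro j
    have h := rbb_perm (N := N) ν hexch (Equiv.swap j0 j) (fun a => (a j0 : ℝ))
    simpa only [Equiv.swap_apply_left] using h
  have hxWj : ∀ j : Fin L, rbbE N ν (fun a => (a j : ℝ) * (rbbTrials a : ℝ))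
      = rbbE N ν (fun a => (a j0 : ℝ) * (rbbTrials a : ℝ)) := by
    intro j
    have h := rbb_perm (N := N) ν hexch (Equiv.swap j0 j)
      (fun a => (a j0 : ℝ) * (rbbTrials a : ℝ))
    simpa only [Equiv.swap_apply_left, hWsymm] using h
  have hwWj : ∀ j : Fin L,
      rbbE N ν (fun a => (if 0 < a j then (1:ℝ) else 0) * (rbbTrials a : ℝ))
      = rbbE N ν (fun a => (if 0 < a j0 then (1:ℝ) else 0) * (rbbTrials a : ℝ)) := by
    intro j
    have h := rbb_perm (N := N) ν hexch (Equiv.swap j0 j)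
      (fun a => (if 0 < a j0 then (1:ℝ) else 0) * (rbbTrials a : ℝ))
    simpa only [Equiv.swap_apply_left, hWsymm] using h
  -- support facts
  have hsumS : ∀ a ∈ piAntidiag (univ : Finset (Fin L)) N, (∑ j, (a j : ℝ)) = (N : ℝ) := by
    intro a ha
    simp only [mem_piAntidiag] at ha
    exact_mod_cast congrArg (Nat.cast : ℕ → ℝ) ha.1
  have hconst : ∀ c : ℝ, rbbE N ν (fun _ => c) = c := by
    intro c
    simp only [rbbE, ← Finset.sum_mul]
    rw [rbb_mass ν hsupp, one_mul]
  -- first moments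
  have hW : rbbE N ν (fun a => (rbbTrials a : ℝ)) = (L:ℝ) * p := by
    calc rbbE N ν (fun a => (rbbTrials a : ℝ))
        = rbbE N ν (fun a => ∑ j, (if 0 < a j then (1:ℝ) else 0)) :=
          rbbE_congr ν fun a _ => hWcast a
      _ = ∑ j : Fin L, rbbE N ν (fun a => if 0 < a j then (1:ℝ) else 0) := rbbE_sum ν _
      _ = ∑ _j : Fin L, p := Finset.sum_congr rfl fun j _ => hwj j
      _ = (L:ℝ) * p := by simp [mul_comm]
  have hm1 : rbbE N ν (fun a => (a j0 : ℝ)) = r := by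
    have h2 : (L:ℝ) * rbbE N ν (fun a => (a j0 : ℝ)) = (L:ℝ) * r := by
      calc (L:ℝ) * rbbE N ν (fun a => (a j0 : ℝ))
          = ∑ j : Fin L, rbbE N ν (fun a => (a j : ℝ)) := by
            rw [Finset.sum_congr rfl fun j _ => hxj j]
            simp [mul_comm]
        _ = rbbE N ν (fun a => ∑ j, (a j : ℝ)) := (rbbE_sum ν _).symm
        _ = rbbE N ν (fun _ => (N : ℝ)) := rbbE_congr ν fun a ha => hsumS a ha
        _ = (N : ℝ) := hconst _
        _ = (L:ℝ) * r := by rw [hN]; ring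
    exact mul_left_cancel₀ hL0 h2
  have hxW : rbbE N ν (fun a => (a j0 : ℝ) * (rbbTrials a : ℝ)) = r * ((L:ℝ) * p) := by
    have h2 : (L:ℝ) * rbbE N ν (fun a => (a j0 : ℝ) * (rbbTrials a : ℝ))
        = (L:ℝ) * (r * ((L:ℝ) * p)) := by
      calc (L:ℝ) * rbbE N ν (fun a => (a j0 : ℝ) * (rbbTrials a : ℝ))
          = ∑ j : Fin L, rbbE N ν (fun a => (a j : ℝ) * (rbbTrials a : ℝ)) := by
            rw [Finset.sum_congr rfl fun j _ => hxWj j]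
            simp [mul_comm]
        _ = rbbE N ν (fun a => ∑ j, (a j : ℝ) * (rbbTrials a : ℝ)) := (rbbE_sum ν _).symm
        _ = rbbE N ν (fun a => (N:ℝ) * (rbbTrials a : ℝ)) := by
            refine rbbE_congr ν fun a ha => ?_
            rw [← Finset.sum_mul, hsumS a ha]
        _ = (N:ℝ) * rbbE N ν (fun a => (rbbTrials a : ℝ)) := rbbE_smul ν _ _
        _ = (L:ℝ) * (r * ((L:ℝ) * p)) := by rw [hW, hN]; ring
    exact mul_left_cancel₀ hL0 h2
  have hwW : (L:ℝ) * rbbE N ν (fun a => (if 0 < a j0 then (1:ℝ) else 0) * (rbbTrials a : ℝ))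
      = rbbE N ν (fun a => (rbbTrials a : ℝ) * (rbbTrials a : ℝ)) := by
    calc (L:ℝ) * rbbE N ν (fun a => (if 0 < a j0 then (1:ℝ) else 0) * (rbbTrials a : ℝ))
        = ∑ j : Fin L, rbbE N ν (fun a => (if 0 < a j then (1:ℝ) else 0) * (rbbTrials a : ℝ)) := by
          rw [Finset.sum_congr rfl fun j _ => hwWj j]
          simp [mul_comm]
      _ = rbbE N ν (fun a => ∑ j, (if 0 < a j then (1:ℝ) else 0) * (rbbTrials a : ℝ)) :=
          (rbbE_sum ν _).symm
      _ = rbbE N ν (fun a => (rbbTrials a : ℝ) * (rbbTrials a : ℝ)) := by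
          refine rbbE_congr ν fun a _ => ?_
          rw [← Finset.sum_mul, ← hWcast a]
  have hwW2 : rbbE N ν (fun a => (if 0 < a j0 then (1:ℝ) else 0) * (rbbTrials a : ℝ))
      = p + ((L:ℝ) - 1) * q := by
    calc rbbE N ν (fun a => (if 0 < a j0 then (1:ℝ) else 0) * (rbbTrials a : ℝ))
        = rbbE N ν (fun a => ∑ j, (if 0 < a j0 then (1:ℝ) else 0)
            * (if 0 < a j then (1:ℝ) else 0)) := by
          refine rbbE_congr ν fun a _ => ?_
          rw [← Finset.mul_sum, ← hWcast a]
      _ = ∑ j : Fin L, rbbE N ν (fun a => (if 0 < a j0 then (1:ℝ) else 0)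
            * (if 0 < a j then (1:ℝ) else 0)) := rbbE_sum ν _
      _ = p + ((L:ℝ) - 1) * q := by
          rw [← Finset.add_sum_erase univ _ (mem_univ j0)]
          congr 1
          · calc rbbE N ν (fun a => (if 0 < a j0 then (1:ℝ) else 0)
                * (if 0 < a j0 then (1:ℝ) else 0))
                = rbbE N ν (fun a => if 0 < a j0 then (1:ℝ) else 0) :=
                  rbbE_congr ν fun a _ => by by_cases h : 0 < a j0 <;> simp [h]
              _ = p := hwj j0
          · rw [Finset.sum_congr rfl (fun j hj => hq2 j (Finset.ne_of_mem_erase hj))]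
            simp [Finset.card_erase_of_mem, Nat.cast_sub hL1]
  -- stationarity
  have hstat : rbbE N ν (fun a => ((L^2 * (a j0)^2 : ℕ) : ℝ))
      = rbbE N ν (fun a => ((rbbG j0 a : ℕ) : ℝ)) := by
    have h := congrArg ENNReal.toReal (rbb_stationarity ν hinv j0)
    rwa [rbb_tsum_toReal ν hsupp, rbb_tsum_toReal ν hsupp] at h
  -- pointwise expansion of g
  have hgpt : ∀ a : Fin L → ℕ, ((rbbG j0 a : ℕ) : ℝ)
      = (L:ℝ)^2*((a j0 : ℝ)^2 - 2*(a j0 : ℝ) + (if 0 < a j0 then (1:ℝ) else 0))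
        + 2*(L:ℝ)*((a j0 : ℝ)*(rbbTrials a : ℝ)
            - (if 0 < a j0 then (1:ℝ) else 0)*(rbbTrials a : ℝ))
        + (rbbTrials a : ℝ)*(rbbTrials a : ℝ) + ((L:ℝ)-1)*(rbbTrials a : ℝ) := by
    intro a
    rcases Nat.eq_zero_or_pos (a j0) with h | h
    · simp only [rbbG, rbbC, h, Nat.lt_irrefl, if_neg (lt_irrefl 0)]
      push_cast [Nat.cast_sub hL1]
      ring
    · simp only [rbbG, rbbC, if_pos h]
      push_cast [Nat.cast_sub hL1, Nat.cast_sub h]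
      ring
  -- assemble the big equation
  set X2 : ℝ := rbbE N ν (fun a => (a j0 : ℝ)^2) with hX2
  set u : ℝ := rbbE N ν (fun a => (if 0 < a j0 then (1:ℝ) else 0) * (rbbTrials a : ℝ)) with hu
  have hlhs : rbbE N ν (fun a => ((L^2 * (a j0)^2 : ℕ) : ℝ)) = (L:ℝ)^2 * X2 := by
    rw [hX2, ← rbbE_smul ν ((L:ℝ)^2)]
    refine rbbE_congr ν fun a _ => ?_
    push_cast
    ring
  have hrhs : rbbE N ν (fun a => ((rbbG j0 a : ℕ) : ℝ))
      = (L:ℝ)^2 * X2 - 2*(L:ℝ)^2*r + (L:ℝ)^2*p + 2*(L:ℝ)*(r*((L:ℝ)*p))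
        - 2*(L:ℝ)*u + (L:ℝ)*u + ((L:ℝ)-1)*((L:ℝ)*p) := by
    have step : rbbE N ν (fun a => ((rbbG j0 a : ℕ) : ℝ))
        = (L:ℝ)^2 * rbbE N ν (fun a => (a j0 : ℝ)^2)
          - 2*(L:ℝ)^2 * rbbE N ν (fun a => (a j0 : ℝ))
          + (L:ℝ)^2 * p
          + 2*(L:ℝ) * rbbE N ν (fun a => (a j0 : ℝ) * (rbbTrials a : ℝ))
          - 2*(L:ℝ) * u
          + rbbE N ν (fun a => (rbbTrials a : ℝ) * (rbbTrials a : ℝ))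
          + ((L:ℝ)-1) * rbbE N ν (fun a => (rbbTrials a : ℝ)) := by
      simp only [rbbE, hp, hu, Finset.mul_sum, ← Finset.sum_sub_distrib,
        ← Finset.sum_add_distrib]
      refine Finset.sum_congr rfl fun a _ => ?_
      rw [hgpt a]
      ring
    rw [step, hm1, hxW, ← hwW, hW]
    try rw [hX2]
    try ring
  have EQ := hstat
  rw [hlhs, hrhs] at EQ
  -- solve for q
  have hkey : ((L:ℝ) - 1) * q = 2*p*((r+1)*(L:ℝ) - 1) - 2*r*(L:ℝ) := by
    have hu2 : u = p + ((L:ℝ) - 1) * q := hwW2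
    rw [hu2] at EQ
    have hkeyL : (L:ℝ) * (((L:ℝ) - 1) * q) = (L:ℝ) * (2*p*((r+1)*(L:ℝ) - 1) - 2*r*(L:ℝ)) := by
      linear_combination EQ
    exact mul_left_cancel₀ hL0 hkeyL
  -- integrals
  have hIw0 : (∫ η, (if 0 < η (⟨0, by omega⟩ : Fin L) then (1 : ℝ) else 0) ∂ν) = p := by
    show (∫ η, (if 0 < η j0 then (1 : ℝ) else 0) ∂ν) = p
    rw [rbb_integral ν hsupp (fun a => if 0 < a j0 then (1:ℝ) else 0)
      (fun a => by by_cases h : 0 < a j0 <;> simp [h]), hp]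
    rfl
  have hIw1 : (∫ η, (if 0 < η (⟨1, by omega⟩ : Fin L) then (1 : ℝ) else 0) ∂ν) = p := by
    show (∫ η, (if 0 < η j1 then (1 : ℝ) else 0) ∂ν) = p
    rw [rbb_integral ν hsupp (fun a => if 0 < a j1 then (1:ℝ) else 0)
      (fun a => by by_cases h : 0 < a j1 <;> simp [h])]
    exact hwj j1
  have hIq : (∫ η, (if 0 < η (⟨0, by omega⟩ : Fin L) then (1 : ℝ) else 0)
      * (if 0 < η (⟨1, by omega⟩ : Fin L) then (1 : ℝ) else 0) ∂ν) = q := by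
    show (∫ η, (if 0 < η j0 then (1 : ℝ) else 0)
      * (if 0 < η j1 then (1 : ℝ) else 0) ∂ν) = q
    rw [rbb_integral ν hsupp
      (fun a => (if 0 < a j0 then (1:ℝ) else 0) * (if 0 < a j1 then (1:ℝ) else 0))
      (fun a => by by_cases h : 0 < a j0 <;> by_cases h' : 0 < a j1 <;> simp [h, h']), hq]
    rfl
  have hq' : q = (2*p*((r+1)*(L:ℝ) - 1) - 2*r*(L:ℝ))/((L:ℝ)-1) := by
    rw [eq_div_iff hL1R]
    linear_combination hkey
  rw [hIq, hIw0, hIw1, hq']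
  field_simp
  ring
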